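/- Let (E, L, E) be a minimal labeled space. Suppose there exist a nonempty set A₀ ∈ E and an irreducible labeled path β such that L(A₀ E^{n|β|}) = {βⁿ} for all n ≥ 1. Then there is N ≥ 1 such that for all n ≥ N, r(A₀, x_{[1,n]}) ⊆ ∪_{j=1}^{n-1} r(A₀, x_{[1,j]}), where x = βββ··· is the infinite repetition of β. -/

import Mathlib

universe u v

variable {V : Type u} {Λ : Type v}

/-- The relative range `r(S, α)` of a set of vertices along a labeled path. -/
def relRange (Edge : V → Λ → V → Prop) : Set V → List Λ → Set V
  | S, [] => S
  | S, a :: α => relRange Edge {w | ∃ u ∈ S, Edge u a w} α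

/-- The range `r(α)` of a labeled path. -/
def lrange (Edge : V → Λ → V → Prop) (α : List Λ) : Set V :=
  relRange Edge Set.univ α

/-- `α` is a (nonempty) labeled path of the labeled graph. -/
def IsLP (Edge : V → Λ → V → Prop) (α : List Λ) : Prop :=
  α ≠ [] ∧ (lrange Edge α).Nonempty

/-- `L(SE¹)`: labels of edges emitted from `S`. -/
def edgeLabels (Edge : V → Λ → V → Prop) (S : Set V) : Set Λ :=
  {a | ∃ u ∈ S, ∃ w, Edge u a w}

/-- `S` is regular: every nonempty `B ∈ ℬ` with `B ⊆ S` emits a finite nonzero set of labels. -/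
def RegularSet (Edge : V → Λ → V → Prop) (ℬ : Set (Set V)) (S : Set V) : Prop :=
  ∀ B ∈ ℬ, B ⊆ S → B.Nonempty →
    (edgeLabels Edge B).Finite ∧ (edgeLabels Edge B).Nonempty

/-- `H ⊆ ℬ` is hereditary. -/
def Hered (Edge : V → Λ → V → Prop) (ℬ H : Set (Set V)) : Prop :=
  H ⊆ ℬ ∧ (∀ A ∈ H, ∀ α : List Λ, IsLP Edge α → relRange Edge A α ∈ H) ∧
    (∀ A ∈ H, ∀ B ∈ H, A ∪ B ∈ H) ∧ (∀ A ∈ H, ∀ B ∈ ℬ, B ⊆ A → B ∈ H)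

/-- `H` is saturated. -/
def Satur (Edge : V → Λ → V → Prop) (ℬ H : Set (Set V)) : Prop :=
  ∀ A ∈ ℬ, RegularSet Edge ℬ A →
    (∀ α : List Λ, IsLP Edge α → relRange Edge A α ∈ H) → A ∈ H

/-- `H(A)`: sets covered by finitely many relative ranges `r(A, αᵢ)`, `αᵢ ∈ L^#(E)`. -/
def HSet (Edge : V → Λ → V → Prop) (ℬ : Set (Set V)) (A : Set V) : Set (Set V) :=
  {B ∈ ℬ | ∃ l : List (List Λ), (∀ α ∈ l, α = [] ∨ IsLP Edge α) ∧
    B ⊆ ⋃ α ∈ l, relRange Edge A α}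

/-- `S(H(A))`: the saturation of `H(A)`. -/
def SHSet (Edge : V → Λ → V → Prop) (ℬ : Set (Set V)) (A : Set V) : Set (Set V) :=
  {B ∈ ℬ | ∃ n : ℕ,
    (∀ β : List Λ, (β = [] ∨ IsLP Edge β) → β.length = n →
      relRange Edge B β ∈ HSet Edge ℬ A) ∧
    (∀ γ : List Λ, (γ = [] ∨ IsLP Edge γ) → γ.length < n →
      ∃ C ∈ HSet Edge ℬ A, ∃ D ∈ ℬ, RegularSet Edge ℬ D ∧ relRange Edge B γ = C ∪ D)}

/-- `ℬ` is an accommodating set for the labeled graph. -/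
def Accommodating (Edge : V → Λ → V → Prop) (ℬ : Set (Set V)) : Prop :=
  (∀ α : List Λ, IsLP Edge α → lrange Edge α ∈ ℬ) ∧
    (∀ A ∈ ℬ, ∀ α : List Λ, IsLP Edge α → relRange Edge A α ∈ ℬ) ∧
    (∀ A ∈ ℬ, ∀ B ∈ ℬ, A ∪ B ∈ ℬ) ∧ (∀ A ∈ ℬ, ∀ B ∈ ℬ, A ∩ B ∈ ℬ)

/-- `ℬ` is non-degenerate: closed under relative complements (and contains `∅`). -/
def NonDegenerate (ℬ : Set (Set V)) : Prop :=
  (∅ : Set V) ∈ ℬ ∧ ∀ A ∈ ℬ, ∀ B ∈ ℬ, A \ B ∈ ℬ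

/-- The labeled space is weakly left-resolving. -/
def WLR (Edge : V → Λ → V → Prop) (ℬ : Set (Set V)) : Prop :=
  ∀ A ∈ ℬ, ∀ B ∈ ℬ, ∀ α : List Λ, IsLP Edge α →
    relRange Edge (A ∩ B) α = relRange Edge A α ∩ relRange Edge B α

/-- `ℬ` is the smallest non-degenerate accommodating set. -/
def SmallestAccom (Edge : V → Λ → V → Prop) (ℬ : Set (Set V)) : Prop :=
  Accommodating Edge ℬ ∧ NonDegenerate ℬ ∧
    ∀ ℬ' : Set (Set V), Accommodating Edge ℬ' → NonDegenerate ℬ' → ℬ ⊆ ℬ'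

/-- `x_{[1,n]}`: the length-`n` prefix of an infinite word. -/
def wordPrefix (x : ℕ → Λ) (n : ℕ) : List Λ := List.ofFn fun i : Fin n => x i.val

/-- `x` lies in the closure of `L(E^∞)`: all finite prefixes are labeled paths. -/
def InfWord (Edge : V → Λ → V → Prop) (x : ℕ → Λ) : Prop :=
  ∀ n : ℕ, 1 ≤ n → IsLP Edge (wordPrefix x n)

/-- Strong cofinality of a labeled space. -/
def StrCofinal (Edge : V → Λ → V → Prop) (ℬ : Set (Set V)) : Prop :=
  ∀ A ∈ ℬ, A.Nonempty → ∀ x : ℕ → Λ, InfWord Edge x →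
    ∃ N : ℕ, 1 ≤ N ∧ ∃ l : List (List Λ), (∀ α ∈ l, IsLP Edge α) ∧
      lrange Edge (wordPrefix x N) ⊆ ⋃ α ∈ l, relRange Edge A α

/-- Minimality: the only hereditary saturated subsets of `ℬ` are `{∅}` and `ℬ`. -/
def MinimalLS (Edge : V → Λ → V → Prop) (ℬ : Set (Set V)) : Prop :=
  ∀ H : Set (Set V), Hered Edge ℬ H → Satur Edge ℬ H → H ⊆ {∅} ∨ H = ℬ

/-- `L(SEⁿ)`: labels of paths of length `n` with source in `S`. -/
def labelsOfLen (Edge : V → Λ → V → Prop) (S : Set V) (n : ℕ) : Set (List Λ) :=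
  {β | β.length = n ∧ (relRange Edge S β).Nonempty}

/-- The labeled space is disagreeable. -/
def Disagreeable (Edge : V → Λ → V → Prop) (ℬ : Set (Set V)) : Prop :=
  ∀ A ∈ ℬ, A.Nonempty → ∀ β : List Λ, IsLP Edge β →
    ∃ n : ℕ, 1 ≤ n ∧ labelsOfLen Edge A (β.length * n) ≠ {(List.replicate n β).flatten}

/-- `(α, A)` is a cycle. -/
def IsCycle (Edge : V → Λ → V → Prop) (ℬ : Set (Set V)) (α : List Λ) (A : Set V) : Prop :=
  IsLP Edge α ∧ A ∈ ℬ ∧ A.Nonempty ∧ ∀ B ∈ ℬ, B ⊆ A → relRange Edge B α = B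

/-- The cycle `(α, A)` has an exit. -/
def CycleHasExit (Edge : V → Λ → V → Prop) (ℬ : Set (Set V)) (α : List Λ) (A : Set V) : Prop :=
  ∃ t : ℕ, 1 ≤ t ∧ t ≤ α.length ∧ ∃ B ∈ ℬ, B.Nonempty ∧
    B ⊆ relRange Edge A (α.take t) ∧
    edgeLabels Edge B ≠ {a : Λ | α[t % α.length]? = some a}

/-- The cycle `(α, A)` has no exits. -/
def CycleNoExit (Edge : V → Λ → V → Prop) (ℬ : Set (Set V)) (α : List Λ) (A : Set V) : Prop :=
  ∀ t : ℕ, 1 ≤ t → t ≤ α.length → ∀ B ∈ ℬ, B.Nonempty →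
    B ⊆ relRange Edge A (α.take t) →
    RegularSet Edge ℬ B ∧ edgeLabels Edge B = {a : Λ | α[t % α.length]? = some a}

/-- Condition (L): every cycle has an exit. -/
def CondL (Edge : V → Λ → V → Prop) (ℬ : Set (Set V)) : Prop :=
  ∀ (α : List Λ) (A : Set V), IsCycle Edge ℬ α A → CycleHasExit Edge ℬ α A

/-- `α` is a loop at `A`. -/
def IsLoop (Edge : V → Λ → V → Prop) (α : List Λ) (A : Set V) : Prop :=
  IsLP Edge α ∧ A ⊆ relRange Edge A α

/-- The loop `(α, A)` has an exit. -/
def LoopHasExit (Edge : V → Λ → V → Prop) (α : List Λ) (A : Set V) : Prop :=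
  {β : List Λ | ∃ k : ℕ, 1 ≤ k ∧ k ≤ α.length ∧ β = α.take k} ⊂
      {β : List Λ | 1 ≤ β.length ∧ β.length ≤ α.length ∧ (relRange Edge A β).Nonempty} ∨
    A ⊂ relRange Edge A α

/-- `β` is an irreducible path: not a repetition of a proper initial path. -/
def IrreduciblePath (β : List Λ) : Prop :=
  ∀ k : ℕ, 1 ≤ k → k < β.length → ∀ m : ℕ, β ≠ (List.replicate m (β.take k)).flatten

/-- The generalized vertex `[v]_l`. -/
def gvClass (Edge : V → Λ → V → Prop) (l : ℕ) (v : V) : Set V :=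
  {w | ∀ β : List Λ, 1 ≤ β.length → β.length ≤ l → (v ∈ lrange Edge β ↔ w ∈ lrange Edge β)}

/-- `s(x)`: sources of infinite paths labeled by `x`. -/
def srcInf (Edge : V → Λ → V → Prop) (x : ℕ → Λ) : Set V :=
  {w | ∃ p : ℕ → V, p 0 = w ∧ ∀ n : ℕ, Edge (p n) (x n) (p (n + 1))}



section Aux

variable {Edge : V → Λ → V → Prop}

private lemma relRange_append (S : Set V) (u v : List Λ) :
    relRange Edge S (u ++ v) = relRange Edge (relRange Edge S u) v := by
  induction u generalizing S with
  | nil => rfl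
  | cons a u ih => simpa [relRange] using ih _

private lemma relRange_mono {S T : Set V} (h : S ⊆ T) (u : List Λ) :
    relRange Edge S u ⊆ relRange Edge T u := by
  induction u generalizing S T with
  | nil => exact h
  | cons a u ih =>
      simp only [relRange]
      exact ih (fun w hw => by obtain ⟨z, hz, he⟩ := hw; exact ⟨z, h hz, he⟩)

private lemma relRange_empty (u : List Λ) : relRange Edge (∅ : Set V) u = ∅ := by
  induction u with
  | nil => rfl
  | cons a u ih =>
      simp only [relRange]
      convert ih using 2
      ext w; simp

private lemma exists_mem_of_mem_relRange {S : Set V} {u : List Λ} {w : V}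
    (h : w ∈ relRange Edge S u) : ∃ s ∈ S, w ∈ relRange Edge {s} u := by
  induction u generalizing S with
  | nil => exact ⟨w, h, rfl⟩
  | cons a u ih =>
      simp only [relRange] at h
      obtain ⟨v, ⟨s, hs, he⟩, hw⟩ := ih h
      refine ⟨s, hs, ?_⟩
      simp only [relRange]
      exact relRange_mono (by intro z hz; rcases hz with rfl; exact ⟨s, rfl, he⟩) u hw

private lemma relRange_nonempty_prefix {S : Set V} {u v : List Λ}
    (h : (relRange Edge S (u ++ v)).Nonempty) : (relRange Edge S u).Nonempty := by
  rw [relRange_append] at h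
  by_contra hne
  rw [Set.not_nonempty_iff_eq_empty] at hne
  rw [hne, relRange_empty] at h
  exact h.ne_empty rfl

private lemma mem_relRange_append {S : Set V} {u v : List Λ} {s' w : V}
    (hs' : s' ∈ relRange Edge S u) (hw : w ∈ relRange Edge {s'} v) :
    w ∈ relRange Edge S (u ++ v) := by
  rw [relRange_append]
  exact relRange_mono (by intro z hz; rcases hz with rfl; exact hs') v hw

private lemma relRange_append_nonempty {S : Set V} {u v : List Λ} {s' : V}
    (hs' : s' ∈ relRange Edge S u) (hw : (relRange Edge {s'} v).Nonempty) :
    (relRange Edge S (u ++ v)).Nonempty := by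
  obtain ⟨w, hw⟩ := hw
  exact ⟨w, mem_relRange_append hs' hw⟩

private lemma relRange_union (S T : Set V) (u : List Λ) :
    relRange Edge (S ∪ T) u = relRange Edge S u ∪ relRange Edge T u := by
  induction u generalizing S T with
  | nil => rfl
  | cons a u ih =>
      simp only [relRange]
      have hbase : {w | ∃ u ∈ S ∪ T, Edge u a w} =
          ({w | ∃ u ∈ S, Edge u a w} ∪ {w | ∃ u ∈ T, Edge u a w} : Set V) := by
        ext w
        simp only [Set.mem_union, Set.mem_setOf_eq]
        constructor
        · rintro ⟨z, hz | hz, he⟩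
          · exact Or.inl ⟨z, hz, he⟩
          · exact Or.inr ⟨z, hz, he⟩
        · rintro (⟨z, hz, he⟩ | ⟨z, hz, he⟩)
          · exact ⟨z, Or.inl hz, he⟩
          · exact ⟨z, Or.inr hz, he⟩
      rw [hbase, ih]

/-- the word segment `x_{[k+1, k+t]}` -/
private def seg (x : ℕ → Λ) (k t : ℕ) : List Λ := List.ofFn fun i : Fin t => x (k + i.1)

private lemma length_seg (x : ℕ → Λ) (k t : ℕ) : (seg x k t).length = t :=
  List.length_ofFn

private lemma seg_append (x : ℕ → Λ) (k a b : ℕ) :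
    seg x k (a + b) = seg x k a ++ seg x (k + a) b := by
  unfold seg
  rw [List.ofFn_add]
  congr 1
  exact congrArg List.ofFn (by
    funext i
    simp only [Fin.coe_natAdd]
    exact congrArg x (Nat.add_assoc k a i.1).symm)

private lemma seg_take (x : ℕ → Λ) {k a t : ℕ} (h : a ≤ t) :
    (seg x k t).take a = seg x k a := by
  have : t = a + (t - a) := by omega
  rw [this, seg_append]
  exact List.take_left' (length_seg _ _ _)

section Period

variable {x : ℕ → Λ} {L : ℕ}

private lemma x_add_mul (hper : ∀ i, x (i + L) = x i) (m c : ℕ) : x (m + c * L) = x m := by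
  induction c with
  | zero => simp
  | succ c ih => rw [show m + (c+1) * L = (m + c * L) + L by ring, hper, ih]

private lemma x_mod (hper : ∀ i, x (i + L) = x i) (hL : 0 < L) (n : ℕ) : x n = x (n % L) := by
  conv_lhs => rw [show n = n % L + (n / L) * L by
    have h1 := Nat.mod_add_div n L
    have h2 : L * (n / L) = (n / L) * L := Nat.mul_comm _ _
    omega]
  rw [x_add_mul hper]

private lemma seg_congr (hper : ∀ i, x (i + L) = x i) (hL : 0 < L) {k k' : ℕ}
    (h : k % L = k' % L) (t : ℕ) : seg x k t = seg x k' t := by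
  unfold seg
  congr 1
  funext i
  rw [x_mod hper hL (k + i.1), x_mod hper hL (k' + i.1), Nat.add_mod, h, ← Nat.add_mod]

private lemma join_replicate (hper : ∀ i, x (i + L) = x i) (hL : 0 < L) (n : ℕ) :
    (List.replicate n (seg x 0 L)).flatten = seg x 0 (n * L) := by
  induction n with
  | zero => simp [seg]
  | succ n ih =>
      rw [List.replicate_succ, List.flatten_cons, ih,
        show (n+1) * L = L + n * L by ring, seg_append]
      congr 1
      exact (seg_congr hper hL (by simp) (n * L)).symm

private lemma period_sub (ha : ∀ m, x (m + a) = x m) (hb : ∀ m, x (m + b) = x m)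
    (h : b ≤ a) : ∀ m, x (m + (a - b)) = x m := by
  intro m
  rw [← hb (m + (a - b)), show m + (a - b) + b = m + a by omega, ha]

private lemma period_mod (hb : 0 < b) (ha : ∀ m, x (m + a) = x m)
    (hbp : ∀ m, x (m + b) = x m) : ∀ m, x (m + a % b) = x m := by
  have key : ∀ q, b * q ≤ a → ∀ m, x (m + (a - b * q)) = x m := by
    intro q
    induction q with
    | zero => simpa using ha
    | succ q ih =>
        intro hq m
        have hbq : b * (q + 1) = b * q + b := by ring
        have h1 : b * q ≤ a := by omega
        have := period_sub (ih h1) hbp (by omega)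
        rw [show a - b * (q+1) = a - b * q - b by omega]
        exact this m
  have h0 := Nat.mod_add_div a b
  have h1 : b * (a / b) ≤ a := by omega
  have h2 : a % b = a - b * (a / b) := by omega
  rw [h2]; exact key _ h1

private lemma period_gcd (ha : ∀ m, x (m + a) = x m) (hb : ∀ m, x (m + b) = x m) :
    ∀ m, x (m + Nat.gcd a b) = x m := by
  induction a, b using Nat.gcd.induction with
  | H0 n => simpa using hb
  | H1 m n hm ih =>
      rw [Nat.gcd_rec]
      exact fun k => ih (period_mod hm hb ha) ha k

end Period

private lemma seg_eq_x_eq {x : ℕ → Λ} {j k t : ℕ} (h : seg x j t = seg x k t) :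
    ∀ i < t, x (j + i) = x (k + i) := by
  intro i hi
  have h1 : i < (seg x j t).length := by rw [length_seg]; exact hi
  have h2 : i < (seg x k t).length := by rw [length_seg]; exact hi
  calc x (j + i) = (seg x j t)[i]'h1 := (List.getElem_ofFn h1).symm
    _ = (seg x k t)[i]'h2 := List.getElem_of_eq h h1
    _ = x (k + i) := List.getElem_ofFn h2

section Period2

variable {x : ℕ → Λ} {L : ℕ}

private lemma period_of_window (hL : 0 < L) (hper : ∀ i, x (i + L) = x i) {j k : ℕ}
    (hjk : j ≤ k) (hw : ∀ i < L, x (j + i) = x (k + i)) :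
    ∀ m, x (m + (k - j)) = x m := by
  intro m
  set i := (m + (L - j % L)) % L with hidef
  have hiL : i < L := Nat.mod_lt _ hL
  have hjm := Nat.mod_add_div j L
  have hjlt : j % L < L := Nat.mod_lt _ hL
  have hr : (j / L + 1) * L = L * (j / L) + L := by ring
  have k2 : j + (m + (L - j % L)) = m + (j / L + 1) * L := by omega
  have key1 : (j + i) % L = m % L := by
    have k1 : (j + i) % L = (j + (m + (L - j % L))) % L :=
      Nat.ModEq.add_left j (Nat.mod_modEq _ L)
    rw [k1, k2]
    exact Nat.add_mul_mod_self_right m (j / L + 1) L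
  have key2 : (k + i) % L = (m + (k - j)) % L := by
    have e1 : k + i = (j + i) + (k - j) := by omega
    rw [e1]
    exact Nat.ModEq.add_right (k - j) key1
  calc x (m + (k - j)) = x ((m + (k - j)) % L) := x_mod hper hL _
    _ = x ((k + i) % L) := by rw [key2]
    _ = x (k + i) := (x_mod hper hL _).symm
    _ = x (j + i) := (hw i hiL).symm
    _ = x ((j + i) % L) := x_mod hper hL _
    _ = x (m % L) := by rw [key1]
    _ = x m := (x_mod hper hL m).symm

private lemma dvd_of_irred (hL : 0 < L) (hper : ∀ i, x (i + L) = x i)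
    (hirr : IrreduciblePath (seg x 0 L)) {d : ℕ} (hd : ∀ m, x (m + d) = x m) : L ∣ d := by
  rcases Nat.eq_zero_or_pos d with rfl | hd0
  · exact dvd_zero L
  by_cases hEq : Nat.gcd d L = L
  · exact hEq ▸ Nat.gcd_dvd_left d L
  · exfalso
    set g := Nat.gcd d L with hg
    have hpg : ∀ m, x (m + g) = x m := period_gcd hd hper
    have hgL : g ∣ L := Nat.gcd_dvd_right d L
    have hg0 : 0 < g := Nat.gcd_pos_of_pos_left _ hd0
    have hgln : g < L := lt_of_le_of_ne (Nat.le_of_dvd hL hgL) hEq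
    refine hirr g hg0 (by rw [length_seg]; exact hgln) (L / g) ?_
    rw [seg_take x (le_of_lt hgln)]
    have h1 : (List.replicate (L / g) (seg x 0 g)).flatten = seg x 0 (L / g * g) :=
      join_replicate hpg hg0 (L / g)
    rw [Nat.div_mul_cancel hgL] at h1
    exact h1.symm

end Period2

private lemma len_le_sum (l : List (List Λ)) (α : List Λ) (h : α ∈ l) :
    α.length ≤ (l.map List.length).sum := by
  induction l with
  | nil => simp at h
  | cons b l ih =>
      rcases List.mem_cons.mp h with rfl | h
      · simp only [List.map_cons, List.sum_cons]; omega
      · have := ih h; simp only [List.map_cons, List.sum_cons]; omega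

end Aux
/-- in a minimal labeled space, if `L(A₀E^{n|β|}) = {βⁿ}` for an
irreducible path `β`, then eventually `r(A₀, x̄_{[1,n]}) ⊆ ⋃_{j=1}^{n-1} r(A₀, x̄_{[1,j]})`,
where `x̄ = βββ⋯`. -/
theorem minimal_repetition_range_absorption (Edge : V → Λ → V → Prop) (ℰ : Set (Set V))
    (hsm : SmallestAccom Edge ℰ) (hwlr : WLR Edge ℰ) (hmin : MinimalLS Edge ℰ)
    (A₀ : Set V) (hA₀ : A₀ ∈ ℰ) (hA₀ne : A₀.Nonempty)
    (β : List Λ) (hβ : IsLP Edge β) (hirr : IrreduciblePath β)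
    (hlab : ∀ n : ℕ, 1 ≤ n →
      labelsOfLen Edge A₀ (n * β.length) = {(List.replicate n β).flatten}) :
    ∃ N : ℕ, 1 ≤ N ∧ ∀ n : ℕ, N ≤ n →
      relRange Edge A₀ ((List.replicate n β).flatten.take n) ⊆
        ⋃ j ∈ Finset.Icc 1 (n - 1), relRange Edge A₀ ((List.replicate n β).flatten.take j) := by
  classical
  by_contra hcon
  push_neg at hcon
  obtain ⟨hAcc, hND, _⟩ := hsm
  obtain ⟨hβne, hβlr⟩ := hβ
  set L := β.length with hLdef
  have hL : 0 < L := List.length_pos_iff.mpr hβne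
  set x : ℕ → Λ := fun i => β.get ⟨i % L, Nat.mod_lt i hL⟩ with hxdef
  have hper : ∀ i, x (i + L) = x i := by
    intro i
    show β.get _ = β.get _
    exact congrArg β.get (Fin.ext (Nat.add_mod_right i L))
  have hβseg : β = seg x 0 L := by
    conv_lhs => rw [← List.ofFn_get β]
    exact congrArg List.ofFn (by
      funext i
      show β.get i = β.get ⟨(0 + i.1) % L, _⟩
      exact congrArg β.get (Fin.ext (by show i.1 = (0 + i.1) % L; rw [Nat.zero_add]; exact (Nat.mod_eq_of_lt i.2).symm)))
  have hirr' : IrreduciblePath (seg x 0 L) := hβseg ▸ hirr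
  have hjoin : ∀ n : ℕ, (List.replicate n β).flatten = seg x 0 (n * L) := fun n => by
    rw [hβseg]; exact join_replicate hper hL n
  have hlab' : ∀ n : ℕ, 1 ≤ n → labelsOfLen Edge A₀ (n * L) = {seg x 0 (n * L)} := by
    intro n hn
    rw [← hjoin n]
    exact hlab n hn
  -- nonemptiness of all the sets r(A₀, x_{[1,j]})
  have hrne : ∀ j : ℕ, (relRange Edge A₀ (seg x 0 j)).Nonempty := by
    intro j
    rcases Nat.eq_zero_or_pos j with rfl | hj
    · have h0 : seg x 0 0 = ([] : List Λ) := by simp [seg]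
      rw [h0]
      exact hA₀ne
    · have hmem : seg x 0 (j * L) ∈ labelsOfLen Edge A₀ (j * L) := by
        rw [hlab' j hj]; rfl
      have hne : (relRange Edge A₀ (seg x 0 (j * L))).Nonempty := hmem.2
      have hle : j ≤ j * L := Nat.le_mul_of_pos_right j hL
      have hsp : seg x 0 (j * L) = seg x 0 j ++ seg x j (j * L - j) := by
        have h := seg_append x 0 j (j * L - j)
        rw [Nat.zero_add] at h
        rw [← h]
        congr 1
        omega
      rw [hsp] at hne
      exact relRange_nonempty_prefix hne
  -- the forcing lemma: a prefix of any label emitted from A₀ is forced to be a prefix of x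
  have FLtake : ∀ (Δ : List Λ) (j : ℕ), (relRange Edge A₀ Δ).Nonempty →
      j + L ≤ Δ.length + 1 → Δ.take j = seg x 0 j := by
    intro Δ j hne hj
    have hdm := Nat.div_add_mod Δ.length L
    have hmlt : Δ.length % L < L := Nat.mod_lt _ hL
    set ℓ := Δ.length / L with hldef
    obtain ⟨M, hM⟩ : ∃ M, M = ℓ * L := ⟨_, rfl⟩
    have hdm' : M + Δ.length % L = Δ.length := by
      rw [hM, Nat.mul_comm]; exact hdm
    obtain ⟨R, hR⟩ : ∃ R, R = Δ.length % L := ⟨_, rfl⟩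
    rw [← hR] at hdm' hmlt
    have hjle : j ≤ M := by omega
    rcases Nat.eq_zero_or_pos ℓ with h0 | hpos
    · have hM0 : M = 0 := by rw [hM, h0, Nat.zero_mul]
      have hj0 : j = 0 := by omega
      rw [hj0]
      simp [seg]
    · have hlenle : M ≤ Δ.length := by omega
      have hTne : (relRange Edge A₀ (Δ.take M)).Nonempty := by
        rw [← List.take_append_drop M Δ] at hne
        exact relRange_nonempty_prefix hne
      have hTlen : (Δ.take M).length = ℓ * L := by
        rw [List.length_take, inf_eq_left.mpr hlenle, hM]
      have hTmem : Δ.take M ∈ labelsOfLen Edge A₀ (ℓ * L) := ⟨hTlen, hTne⟩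
      rw [hlab' ℓ hpos] at hTmem
      have hTeq : Δ.take M = seg x 0 (ℓ * L) := hTmem
      have hjle' : j ≤ ℓ * L := by rw [← hM]; exact hjle
      calc Δ.take j = (Δ.take M).take j := by
            rw [List.take_take, inf_eq_left.mpr hjle]
        _ = (seg x 0 (ℓ * L)).take j := by rw [hTeq]
        _ = seg x 0 j := seg_take x hjle'
  -- the hereditary & saturated set H'
  have HS0 : (∅ : Set V) ∈ HSet Edge ℰ A₀ :=
    ⟨hND.1, [], fun α hα => absurd hα List.not_mem_nil, Set.empty_subset _⟩
  have HSA : A₀ ∈ HSet Edge ℰ A₀ := by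
    refine ⟨hA₀, [[]], ?_, ?_⟩
    · intro α hα
      left
      simpa using hα
    · intro w hw
      exact Set.mem_iUnion₂.mpr ⟨[], List.mem_singleton.mpr rfl, hw⟩
  have HSsub : ∀ {B B' : Set V}, B' ∈ ℰ → B' ⊆ B → B ∈ HSet Edge ℰ A₀ →
      B' ∈ HSet Edge ℰ A₀ := by
    rintro B B' hB'E hsub ⟨hBE, l, hl, hcov⟩
    exact ⟨hB'E, l, hl, hsub.trans hcov⟩
  have HSun : ∀ {B B' : Set V}, B ∈ HSet Edge ℰ A₀ → B' ∈ HSet Edge ℰ A₀ →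
      B ∪ B' ∈ HSet Edge ℰ A₀ := by
    rintro B B' ⟨hBE, l, hl, hcov⟩ ⟨hB'E, l', hl', hcov'⟩
    refine ⟨hAcc.2.2.1 B hBE B' hB'E, l ++ l', ?_, ?_⟩
    · intro α hα
      rcases List.mem_append.mp hα with h | h
      exacts [hl α h, hl' α h]
    · rintro w (hw | hw)
      · obtain ⟨α, hαl, hwα⟩ := Set.mem_iUnion₂.mp (hcov hw)
        exact Set.mem_iUnion₂.mpr ⟨α, List.mem_append.mpr (Or.inl hαl), hwα⟩
      · obtain ⟨α, hαl, hwα⟩ := Set.mem_iUnion₂.mp (hcov' hw)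
        exact Set.mem_iUnion₂.mpr ⟨α, List.mem_append.mpr (Or.inr hαl), hwα⟩
  have HSrel : ∀ {B : Set V} {γ : List Λ}, B ∈ HSet Edge ℰ A₀ → (γ = [] ∨ IsLP Edge γ) →
      relRange Edge B γ ∈ HSet Edge ℰ A₀ := by
    rintro B γ ⟨hBE, l, hl, hcov⟩ (rfl | hγ)
    · exact ⟨hBE, l, hl, hcov⟩
    · refine ⟨hAcc.2.1 B hBE γ hγ,
        l.map (fun α => if (relRange Edge A₀ (α ++ γ)).Nonempty then α ++ γ else []), ?_, ?_⟩
      · intro α' hα'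
        obtain ⟨α, hαl, rfl⟩ := List.mem_map.mp hα'
        by_cases h : (relRange Edge A₀ (α ++ γ)).Nonempty
        · rw [if_pos h]
          right
          refine ⟨?_, Set.Nonempty.mono (relRange_mono (Set.subset_univ _) _) h⟩
          intro hc
          exact hγ.1 (List.append_eq_nil_iff.mp hc).2
        · rw [if_neg h]
          left
          rfl
      · intro w hw
        obtain ⟨b, hb, hwb⟩ := exists_mem_of_mem_relRange hw
        obtain ⟨α, hαl, hbα⟩ := Set.mem_iUnion₂.mp (hcov hb)
        have hwα : w ∈ relRange Edge A₀ (α ++ γ) := mem_relRange_append hbα hwb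
        refine Set.mem_iUnion₂.mpr ⟨α ++ γ, ?_, hwα⟩
        refine List.mem_map.mpr ⟨α, hαl, ?_⟩
        rw [if_pos ⟨w, hwα⟩]
  set Q : Set V → ℕ → Prop := fun B n => ∀ γ : List Λ, (γ = [] ∨ IsLP Edge γ) →
    γ.length = n → relRange Edge B γ ∈ HSet Edge ℰ A₀ with hQdef
  set H' : Set (Set V) := {B | B ∈ ℰ ∧ ∃ n, Q B n} with hH'def
  have hQup : ∀ {B : Set V} {n : ℕ}, Q B n → Q B (n + 1) := by
    intro B n hQn γ hγ hlen
    by_cases hne : (relRange Edge B γ).Nonempty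
    · have hsplit : γ = γ.take n ++ γ.drop n := (List.take_append_drop n γ).symm
      have htlen : (γ.take n).length = n := by
        rw [List.length_take]
        omega
      have hlrγ : (relRange Edge Set.univ γ).Nonempty :=
        Set.Nonempty.mono (relRange_mono (Set.subset_univ _) _) hne
      have hlrt : (relRange Edge Set.univ (γ.take n)).Nonempty := by
        rw [hsplit] at hlrγ
        exact relRange_nonempty_prefix hlrγ
      have htake : γ.take n = [] ∨ IsLP Edge (γ.take n) := by
        rcases Nat.eq_zero_or_pos n with rfl | hn
        · left
          exact List.take_zero (l := γ)
        · right
          refine ⟨?_, hlrt⟩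
          intro hc
          rw [hc] at htlen
          simp at htlen
          omega
      have h1 : relRange Edge B (γ.take n) ∈ HSet Edge ℰ A₀ := hQn _ htake htlen
      have hdrop : γ.drop n = [] ∨ IsLP Edge (γ.drop n) := by
        right
        constructor
        · have hd : (γ.drop n).length = 1 := by
            rw [List.length_drop]
            omega
          intro hc
          rw [hc] at hd
          simp at hd
        · have hsubl : relRange Edge B γ ⊆ relRange Edge Set.univ (γ.drop n) := by
            conv_lhs => rw [hsplit]
            rw [relRange_append]
            exact relRange_mono (Set.subset_univ _) _
          exact Set.Nonempty.mono hsubl hne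
      have h2 := HSrel h1 hdrop
      rwa [← relRange_append, ← hsplit] at h2
    · rw [Set.not_nonempty_iff_eq_empty] at hne
      rw [hne]
      exact HS0
  have hQupT : ∀ {B : Set V} {n : ℕ} (t : ℕ), Q B n → Q B (n + t) := by
    intro B n t h
    induction t with
    | zero => exact h
    | succ t ih => exact hQup ih
  have hQmax : ∀ {B : Set V} {n m : ℕ}, n ≤ m → Q B n → Q B m := by
    intro B n m h hq
    have := hQupT (m - n) hq
    rwa [Nat.add_sub_cancel' h] at this
  have hH'her : Hered Edge ℰ H' := by
    refine ⟨fun B hB => hB.1, ?_, ?_, ?_⟩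
    · rintro B ⟨hBE, n, hQn⟩ δ hδ
      refine ⟨hAcc.2.1 B hBE δ hδ, n, ?_⟩
      intro γ hγ hlen
      by_cases hne : (relRange Edge (relRange Edge B δ) γ).Nonempty
      · have hδγ : δ ++ γ = [] ∨ IsLP Edge (δ ++ γ) := by
          right
          constructor
          · intro hc
            exact hδ.1 (List.append_eq_nil_iff.mp hc).1
          · rw [← relRange_append] at hne
            exact Set.Nonempty.mono (relRange_mono (Set.subset_univ _) _) hne
        have hlen2 : (δ ++ γ).length = n + δ.length := by
          rw [List.length_append, hlen]
          exact Nat.add_comm _ _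
        have h2 := hQupT δ.length hQn (δ ++ γ) hδγ hlen2
        rwa [relRange_append] at h2
      · rw [Set.not_nonempty_iff_eq_empty] at hne
        rw [hne]
        exact HS0
    · rintro B ⟨hBE, n, hQn⟩ B' ⟨hB'E, n', hQn'⟩
      refine ⟨hAcc.2.2.1 _ hBE _ hB'E, max n n', ?_⟩
      intro γ hγ hlen
      rw [relRange_union]
      exact HSun (hQmax (le_max_left _ _) hQn γ hγ hlen)
        (hQmax (le_max_right _ _) hQn' γ hγ hlen)
    · rintro B ⟨hBE, n, hQn⟩ B' hB'E hsub
      refine ⟨hB'E, n, fun γ hγ hlen => ?_⟩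
      have hEmem : relRange Edge B' γ ∈ ℰ := by
        rcases hγ with rfl | hγ
        · exact hB'E
        · exact hAcc.2.1 _ hB'E _ hγ
      exact HSsub hEmem (relRange_mono hsub γ) (hQn γ hγ hlen)
  have hH'sat : Satur Edge ℰ H' := by
    intro A hAE hreg hall
    by_cases hAne : A.Nonempty
    · have hfin : (edgeLabels Edge A).Finite := (hreg A hAE subset_rfl hAne).1
      set Labs := hfin.toFinset with hLabs
      set g : Λ → ℕ := fun a => if h : ∃ n, Q (relRange Edge A [a]) n then h.choose else 0
        with hgdef
      refine ⟨hAE, Labs.sup g + 1, ?_⟩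
      intro γ hγ hlen
      cases γ with
      | nil => simp at hlen
      | cons a γ' =>
        have hrel : relRange Edge A (a :: γ') = relRange Edge (relRange Edge A [a]) γ' := by
          have h := relRange_append (Edge := Edge) A [a] γ'
          rwa [List.singleton_append] at h
        by_cases hne : (relRange Edge A [a]).Nonempty
        · obtain ⟨w, hw⟩ := hne
          have hw' : w ∈ {v | ∃ u ∈ A, Edge u a v} := hw
          obtain ⟨u, hu, he⟩ := hw'
          have haLab : a ∈ Labs := hfin.mem_toFinset.mpr ⟨u, hu, w, he⟩
          have haLP : IsLP Edge [a] :=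
            ⟨by simp, Set.Nonempty.mono (relRange_mono (Set.subset_univ _) _) ⟨w, hw⟩⟩
          obtain ⟨hE1, hex⟩ := hall [a] haLP
          have hQg : Q (relRange Edge A [a]) (g a) := by
            simp only [hgdef]
            rw [dif_pos hex]
            exact hex.choose_spec
          have hQs : Q (relRange Edge A [a]) (Labs.sup g) := hQmax (Finset.le_sup haLab) hQg
          by_cases hne2 : (relRange Edge A (a :: γ')).Nonempty
          · have hγ'len : γ'.length = Labs.sup g := by
              rw [List.length_cons] at hlen
              omega
            have hγ' : γ' = [] ∨ IsLP Edge γ' := by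
              rcases eq_or_ne γ' [] with rfl | hne3
              · left
                rfl
              · right
                refine ⟨hne3, ?_⟩
                rw [hrel] at hne2
                exact Set.Nonempty.mono (relRange_mono (Set.subset_univ _) _) hne2
            rw [hrel]
            exact hQs γ' hγ' hγ'len
          · rw [Set.not_nonempty_iff_eq_empty] at hne2
            rw [hne2]
            exact HS0
        · rw [Set.not_nonempty_iff_eq_empty] at hne
          rw [hrel, hne, relRange_empty]
          exact HS0
    · rw [Set.not_nonempty_iff_eq_empty] at hAne
      subst hAne
      refine ⟨hAE, 0, fun γ hγ hlen => ?_⟩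
      rw [List.length_eq_zero_iff.mp hlen]
      exact HS0
  have hA₀H' : A₀ ∈ H' := ⟨hA₀, 0, fun γ hγ hlen => by
    rw [List.length_eq_zero_iff.mp hlen]
    exact HSA⟩
  rcases hmin H' hH'her hH'sat with hsub1 | hEq
  · have h1 := hsub1 hA₀H'
    rw [Set.mem_singleton_iff] at h1
    rw [h1] at hA₀ne
    exact absurd hA₀ne (by simp)
  · -- the covering of lrange (x_{[1,N]})
    have hYE : lrange Edge β ∈ ℰ := hAcc.1 β ⟨hβne, hβlr⟩
    have hYH' : lrange Edge β ∈ H' := by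
      rw [hEq]
      exact hYE
    obtain ⟨-, n₀, hQY⟩ := hYH'
    have hγ₀ : seg x L n₀ = [] ∨ IsLP Edge (seg x L n₀) := by
      rcases Nat.eq_zero_or_pos n₀ with rfl | hpos
      · left
        simp [seg]
      · right
        constructor
        · intro hc
          have hlen := length_seg x L n₀
          rw [hc] at hlen
          simp at hlen
          omega
        · have hseg0 : seg x L n₀ = seg x 0 n₀ :=
            seg_congr hper hL (by rw [Nat.mod_self, Nat.zero_mod]) n₀
          rw [hseg0]
          exact Set.Nonempty.mono (relRange_mono (Set.subset_univ _) _) (hrne n₀)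
    have hcovm := hQY (seg x L n₀) hγ₀ (length_seg x L n₀)
    have hYrel : relRange Edge (lrange Edge β) (seg x L n₀) =
        relRange Edge Set.univ (seg x 0 (L + n₀)) := by
      show relRange Edge (relRange Edge Set.univ β) (seg x L n₀) = _
      rw [← relRange_append]
      congr 1
      have h := seg_append x 0 L n₀
      rw [Nat.zero_add] at h
      rw [hβseg, ← h]
    rw [hYrel] at hcovm
    obtain ⟨-, l, hl, hcov⟩ := hcovm
    set N := L + n₀ with hNdef
    set K := (l.map List.length).sum with hKdef
    -- pick the bad n' and vertex v
    obtain ⟨n', hge, hnsub⟩ := hcon (K + N + 4 * L + 1) (by omega)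
    obtain ⟨v, hv1, hv2⟩ := Set.not_subset.mp hnsub
    have hnle : n' ≤ n' * L := Nat.le_mul_of_pos_right n' hL
    have hv1' : v ∈ relRange Edge A₀ (seg x 0 n') := by
      rw [hjoin n', seg_take x hnle] at hv1
      exact hv1
    have hv2' : ∀ j, 1 ≤ j → j ≤ n' - 1 → v ∉ relRange Edge A₀ (seg x 0 j) := by
      intro j h1 h2 hmem
      apply hv2
      refine Set.mem_iUnion₂.mpr ⟨j, Finset.mem_Icc.mpr ⟨h1, h2⟩, ?_⟩
      have hjle : j ≤ n' * L := le_trans (by omega) hnle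
      rw [hjoin n', seg_take x hjle]
      exact hmem
    -- choose the cutting position k
    set a := n' - 2 * L - N with hadef
    have hdm := Nat.div_add_mod a L
    obtain ⟨P, hP⟩ : ∃ P, P = L * (a / L) := ⟨_, rfl⟩
    obtain ⟨R, hR⟩ : ∃ R, R = a % L := ⟨_, rfl⟩
    have hmlt : R < L := by
      rw [hR]
      exact Nat.mod_lt _ hL
    rw [← hP, ← hR] at hdm
    set k := N + P with hkdef
    have hk2L : k + 2 * L ≤ n' := by omega
    have hkK : K < k := by omega
    have hkN : N ≤ k := by omega
    have hkmod : k % L = N % L := by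
      rw [hkdef, hP]
      exact Nat.add_mul_mod_self_left N L (a / L)
    -- split the path at position k
    have hsplitk : seg x 0 n' = seg x 0 k ++ seg x k (n' - k) := by
      have h := seg_append x 0 k (n' - k)
      rw [Nat.zero_add] at h
      rw [← h]
      congr 1
      omega
    rw [hsplitk, relRange_append] at hv1'
    obtain ⟨z, hz, hvz⟩ := exists_mem_of_mem_relRange hv1'
    have hσne : (relRange Edge {z} (seg x k (2 * L))).Nonempty := by
      have hsp : seg x k (n' - k) = seg x k (2 * L) ++ seg x (k + 2 * L) (n' - k - 2 * L) := by
        rw [← seg_append]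
        congr 1
        omega
      rw [hsp] at hvz
      exact relRange_nonempty_prefix ⟨v, hvz⟩
    -- z lies in lrange (x_{[1,N]}), hence in the covering
    have hzN : z ∈ relRange Edge Set.univ (seg x 0 N) := by
      have h1 : z ∈ relRange Edge Set.univ (seg x 0 k) :=
        relRange_mono (Set.subset_univ _) _ hz
      have hsp2 : seg x 0 k = seg x 0 (k - N) ++ seg x (k - N) N := by
        have h := seg_append x 0 (k - N) N
        rw [Nat.zero_add] at h
        rw [show k - N + N = k by omega] at h
        exact h
      rw [hsp2, relRange_append] at h1
      have h2 : z ∈ relRange Edge Set.univ (seg x (k - N) N) :=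
        relRange_mono (Set.subset_univ _) _ h1
      have hcong : seg x (k - N) N = seg x 0 N := by
        refine seg_congr hper hL ?_ N
        have hkn : k - N = P := by omega
        rw [hkn, hP, Nat.zero_mod, Nat.mul_mod_right]
      rwa [hcong] at h2
    obtain ⟨α, hαl, hzα⟩ := Set.mem_iUnion₂.mp (hcov hzN)
    set m := α.length with hmdef
    -- the covering word is forced to be a prefix of x
    have hforced : α = seg x 0 m := by
      have hne := relRange_append_nonempty hzα hσne
      have h1 := FLtake (α ++ seg x k (2 * L)) m hne
        (by rw [List.length_append, length_seg]; omega)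
      rw [List.take_left' hmdef.symm] at h1
      exact h1
    have hzm : z ∈ relRange Edge A₀ (seg x 0 m) := hforced ▸ hzα
    have hmk : m < k := lt_of_le_of_lt (len_le_sum l α hαl) hkK
    -- alignment: m ≡ k (mod L)
    have htakL : ∀ j : ℕ, z ∈ relRange Edge A₀ (seg x 0 j) →
        (seg x k (2 * L)).take L = seg x j L := by
      intro j hzj
      have hne := relRange_append_nonempty hzj hσne
      have h1 := FLtake (seg x 0 j ++ seg x k (2 * L)) (j + L) hne
        (by rw [List.length_append, length_seg, length_seg]; omega)
      have h2 : (seg x 0 j ++ seg x k (2 * L)).take (j + L) =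
          seg x 0 j ++ (seg x k (2 * L)).take L := by
        have h3 := List.take_length_add_append (l₁ := seg x 0 j) (l₂ := seg x k (2 * L)) L
        rw [length_seg] at h3
        exact h3
      have h4 : seg x 0 (j + L) = seg x 0 j ++ seg x j L := by
        have h5 := seg_append x 0 j L
        rw [Nat.zero_add] at h5
        exact h5
      rw [h2, h4] at h1
      exact List.append_cancel_left h1
    have hwin : seg x m L = seg x k L := (htakL m hzm).symm.trans (htakL k hz)
    have hmod : m % L = k % L := by
      rcases le_total m k with hle | hle
      · have hper' := period_of_window hL hper hle (seg_eq_x_eq hwin)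
        obtain ⟨c, hc⟩ := dvd_of_irred hL hper hirr' hper'
        rw [show k = m + L * c by omega, Nat.add_mul_mod_self_left]
      · have hper' := period_of_window hL hper hle (fun i hi => (seg_eq_x_eq hwin i hi).symm)
        obtain ⟨c, hc⟩ := dvd_of_irred hL hper hirr' hper'
        rw [show m = k + L * c by omega, Nat.add_mul_mod_self_left]
    -- conclude: v is in an earlier range, contradiction
    have hfin2 : v ∈ relRange Edge A₀ (seg x 0 (m + (n' - k))) := by
      have h1 : v ∈ relRange Edge A₀ (seg x 0 m ++ seg x k (n' - k)) :=
        mem_relRange_append hzm hvz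
      have h2 : seg x k (n' - k) = seg x m (n' - k) := seg_congr hper hL hmod.symm _
      have h3 : seg x 0 (m + (n' - k)) = seg x 0 m ++ seg x m (n' - k) := by
        have h4 := seg_append x 0 m (n' - k)
        rw [Nat.zero_add] at h4
        exact h4
      rw [h3, ← h2]
      exact h1
    exact hv2' (m + (n' - k)) (by omega) (by omega) hfin2
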